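/- Let G₀ be a symmetric positive definite n×n matrix. Then there exist r > 0, unit vectors ξ₁,…,ξ_{n*} in ℝⁿ with n* = n(n+1)/2, and linear maps L_i from the space of symmetric n×n matrices to ℝ, such that G = Σᵢ L_i(G) ξᵢ⊗ξᵢ for every symmetric matrix G, and L_i(G) ≥ r for every i whenever |G - G₀| ≤ r. -/

import Mathlib

open Matrix Finset

noncomputable section NashAux
namespace NashAux

variable {n : ℕ}

/-- entry evaluation as a linear functional -/
def ev (a b : Fin n) : Matrix (Fin n) (Fin n) ℝ →ₗ[ℝ] ℝ where
  toFun M := M a b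
  map_add' _ _ := rfl
  map_smul' _ _ := rfl

@[simp] lemma ev_apply (a b : Fin n) (M : Matrix (Fin n) (Fin n) ℝ) : ev a b M = M a b := rfl

/-- unnormalized vectors -/
def w (q : Fin n × Fin n) : Fin n → ℝ := fun a => if a = q.1 ∨ a = q.2 then 1 else 0

/-- coefficient functionals -/
def lfun (q : Fin n × Fin n) : Matrix (Fin n) (Fin n) ℝ →ₗ[ℝ] ℝ :=
  if q.1 = q.2 then ev q.1 q.1 - ∑ m ∈ Finset.univ.erase q.1, ev q.1 m
  else if q.1 < q.2 then ev q.1 q.2 else 0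

lemma lfun_diag (j : Fin n) (H : Matrix (Fin n) (Fin n) ℝ) :
    lfun (j, j) H = H j j - ∑ m ∈ Finset.univ.erase j, H j m := by
  simp [lfun]

lemma lfun_lt {j k : Fin n} (h : j < k) (H : Matrix (Fin n) (Fin n) ℝ) :
    lfun (j, k) H = H j k := by
  simp [lfun, h, h.ne]

lemma lfun_gt {j k : Fin n} (h : k < j) (H : Matrix (Fin n) (Fin n) ℝ) :
    lfun (j, k) H = 0 := by
  simp [lfun, h.ne', not_lt_of_gt h]

lemma vmv_w_diag (j : Fin n) :
    vecMulVec (w (j, j)) (w (j, j)) = Matrix.single j j (1:ℝ) := by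
  ext a b
  simp only [vecMulVec_apply, w, Matrix.single, of_apply]
  by_cases ha : a = j <;> by_cases hb : b = j <;> simp [ha, hb, eq_comm]
  · simp [Ne.symm hb]
  · simp [Ne.symm ha]
  · simp [Ne.symm ha, Ne.symm hb]

lemma vmv_w_ne {j k : Fin n} (h : j ≠ k) :
    vecMulVec (w (j, k)) (w (j, k)) =
      Matrix.single j j (1:ℝ) + Matrix.single k k 1 + Matrix.single j k 1 +
        Matrix.single k j 1 := by
  ext a b
  simp only [vecMulVec_apply, w, Matrix.single, of_apply, Matrix.add_apply]
  by_cases ha : a = j <;> by_cases hb : b = j <;> by_cases ha' : a = k <;> by_cases hb' : b = k <;>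
    simp_all [eq_comm]

end NashAux

namespace NashAux
variable {n : ℕ}

lemma decomp (H : Matrix (Fin n) (Fin n) ℝ) (hH : H.IsSymm) :
    H = ∑ p : {p : Fin n × Fin n // p.1 ≤ p.2}, lfun p.1 H • vecMulVec (w p.1) (w p.1) := by
  classical
  set F : Fin n × Fin n → Matrix (Fin n) (Fin n) ℝ :=
    fun q => lfun q H • vecMulVec (w q) (w q) with hF
  have hstep1 : ∑ p : {p : Fin n × Fin n // p.1 ≤ p.2}, F p.1
      = ∑ q ∈ Finset.univ.filter (fun q : Fin n × Fin n => q.1 ≤ q.2), F q :=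
    (Finset.sum_subtype _ (by intro x; simp) F).symm
  have hstep2 : ∑ q ∈ Finset.univ.filter (fun q : Fin n × Fin n => q.1 ≤ q.2), F q
      = ∑ q : Fin n × Fin n, F q := by
    apply Finset.sum_filter_of_ne
    intro q _ hq
    by_contra hle
    rw [not_le] at hle
    apply hq
    simp only [hF]
    rw [lfun_gt hle]
    simp
  -- split into diagonal, strict lower part is zero
  have hsplit : ∑ q : Fin n × Fin n, F q
      = ∑ q ∈ Finset.univ.filter (fun q : Fin n × Fin n => q.1 = q.2), F q
        + ∑ q ∈ Finset.univ.filter (fun q : Fin n × Fin n => ¬ q.1 = q.2), F q :=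
    (Finset.sum_filter_add_sum_filter_not _ _ _).symm
  have hne : ∑ q ∈ Finset.univ.filter (fun q : Fin n × Fin n => ¬ q.1 = q.2), F q
      = ∑ q ∈ Finset.univ.filter (fun q : Fin n × Fin n => q.1 < q.2), F q
        + ∑ q ∈ Finset.univ.filter (fun q : Fin n × Fin n => q.2 < q.1), F q := by
    rw [← Finset.sum_filter_add_sum_filter_not
      (Finset.univ.filter (fun q : Fin n × Fin n => ¬ q.1 = q.2))
      (fun q : Fin n × Fin n => q.1 < q.2) F]
    congr 1
    · apply Finset.sum_congr _ (fun _ _ => rfl)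
      ext q
      simp only [Finset.mem_filter, Finset.mem_univ, true_and]
      exact ⟨fun h => h.2, fun h => ⟨h.ne, h⟩⟩
    · apply Finset.sum_congr _ (fun _ _ => rfl)
      ext q
      simp only [Finset.mem_filter, Finset.mem_univ, true_and]
      constructor
      · rintro ⟨h1, h2⟩
        exact lt_of_le_of_ne (not_lt.mp h2) (Ne.symm h1)
      · intro h
        exact ⟨(ne_of_lt h).symm, not_lt_of_gt h⟩
  have hgt : ∑ q ∈ Finset.univ.filter (fun q : Fin n × Fin n => q.2 < q.1), F q = 0 := by
    apply Finset.sum_eq_zero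
    intro q hq
    simp only [Finset.mem_filter] at hq
    simp only [hF]
    rw [lfun_gt hq.2]
    simp
  have hdiag : ∑ q ∈ Finset.univ.filter (fun q : Fin n × Fin n => q.1 = q.2), F q
      = ∑ j : Fin n, (H j j - ∑ m ∈ Finset.univ.erase j, H j m) • Matrix.single j j (1:ℝ) := by
    rw [Finset.sum_nbij' (i := fun q : Fin n × Fin n => q.1) (j := fun j : Fin n => (j, j))]
    · intro a ha; simp
    · intro a ha; simp
    · intro a ha
      simp only [Finset.mem_filter] at ha
      exact Prod.ext rfl ha.2
    · intro a _; rfl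
    · intro a ha
      simp only [Finset.mem_filter] at ha
      obtain ⟨-, h⟩ := ha
      obtain ⟨a1, a2⟩ := a
      dsimp at h
      subst h
      simp only [hF]
      rw [lfun_diag, vmv_w_diag]
  -- strict upper part
  have hlt : ∑ q ∈ Finset.univ.filter (fun q : Fin n × Fin n => q.1 < q.2), F q
      = ∑ q ∈ Finset.univ.filter (fun q : Fin n × Fin n => q.1 < q.2),
          (H q.1 q.2 • (Matrix.single q.1 q.1 (1:ℝ) + Matrix.single q.1 q.2 1))
        + ∑ q ∈ Finset.univ.filter (fun q : Fin n × Fin n => q.1 < q.2),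
          (H q.1 q.2 • (Matrix.single q.2 q.2 (1:ℝ) + Matrix.single q.2 q.1 1)) := by
    rw [← Finset.sum_add_distrib]
    apply Finset.sum_congr rfl
    intro q hq
    simp only [Finset.mem_filter] at hq
    simp only [hF]
    rw [lfun_lt hq.2, vmv_w_ne hq.2.ne, ← smul_add]
    congr 1
    abel
  have hswap : ∑ q ∈ Finset.univ.filter (fun q : Fin n × Fin n => q.1 < q.2),
          (H q.1 q.2 • (Matrix.single q.2 q.2 (1:ℝ) + Matrix.single q.2 q.1 1))
      = ∑ q ∈ Finset.univ.filter (fun q : Fin n × Fin n => q.2 < q.1),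
          (H q.1 q.2 • (Matrix.single q.1 q.1 (1:ℝ) + Matrix.single q.1 q.2 1)) := by
    rw [Finset.sum_nbij' (i := Prod.swap) (j := Prod.swap)]
    · intro a ha; simp only [Finset.mem_filter, Finset.mem_univ, true_and] at ha ⊢
      simpa using ha
    · intro a ha; simp only [Finset.mem_filter, Finset.mem_univ, true_and] at ha ⊢
      simpa using ha
    · intro a _; simp
    · intro a _; simp
    · intro a _
      simp only [Prod.fst_swap, Prod.snd_swap]
      rw [hH.apply]
  have hoffdiag : ∑ q ∈ Finset.univ.filter (fun q : Fin n × Fin n => q.1 < q.2),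
          (H q.1 q.2 • (Matrix.single q.1 q.1 (1:ℝ) + Matrix.single q.1 q.2 1))
        + ∑ q ∈ Finset.univ.filter (fun q : Fin n × Fin n => q.2 < q.1),
          (H q.1 q.2 • (Matrix.single q.1 q.1 (1:ℝ) + Matrix.single q.1 q.2 1))
      = ∑ q ∈ Finset.univ.filter (fun q : Fin n × Fin n => ¬ q.1 = q.2),
          (H q.1 q.2 • (Matrix.single q.1 q.1 (1:ℝ) + Matrix.single q.1 q.2 1)) := by
    rw [← Finset.sum_filter_add_sum_filter_not
      (Finset.univ.filter (fun q : Fin n × Fin n => ¬ q.1 = q.2))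
      (fun q : Fin n × Fin n => q.1 < q.2)]
    congr 1
    · apply Finset.sum_congr _ (fun _ _ => rfl)
      ext q
      simp only [Finset.mem_filter, Finset.mem_univ, true_and]
      exact ⟨fun h => ⟨h.ne, h⟩, fun h => h.2⟩
    · apply Finset.sum_congr _ (fun _ _ => rfl)
      ext q
      simp only [Finset.mem_filter, Finset.mem_univ, true_and]
      constructor
      · intro h
        exact ⟨(ne_of_lt h).symm, not_lt_of_gt h⟩
      · rintro ⟨h1, h2⟩
        exact lt_of_le_of_ne (not_lt.mp h2) (Ne.symm h1)
  -- assemble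
  rw [hstep1, hstep2, hsplit, hne, hgt, add_zero, hdiag, hlt, hswap, hoffdiag]
  have hoff2 : ∑ q ∈ Finset.univ.filter (fun q : Fin n × Fin n => ¬ q.1 = q.2),
          (H q.1 q.2 • (Matrix.single q.1 q.1 (1:ℝ) + Matrix.single q.1 q.2 1))
      = ∑ j : Fin n, ∑ k ∈ Finset.univ.erase j,
          (H j k • (Matrix.single j j (1:ℝ) + Matrix.single j k 1)) := by
    rw [Finset.sum_filter, Fintype.sum_prod_type]
    apply Finset.sum_congr rfl
    intro j _
    rw [← Finset.sum_filter]
    apply Finset.sum_congr _ (fun _ _ => rfl)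
    ext k
    simp [ne_comm, eq_comm]
  rw [hoff2, ← Finset.sum_add_distrib]
  nth_rewrite 1 [matrix_eq_sum_single H]
  apply Finset.sum_congr rfl
  intro j _
  have : ∀ k : Fin n, Matrix.single j k (H j k) = H j k • Matrix.single j k (1:ℝ) := by
    intro k; rw [smul_single, smul_eq_mul, mul_one]
  simp_rw [this]
  rw [sub_smul, Finset.sum_smul]
  simp_rw [smul_add]
  rw [Finset.sum_add_distrib]
  rw [← Finset.add_sum_erase Finset.univ (fun k => H j k • Matrix.single j k (1:ℝ))
    (Finset.mem_univ j)]
  abel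

end NashAux


namespace NashAux
variable {n : ℕ}

lemma conj_vecMulVec (B : Matrix (Fin n) (Fin n) ℝ) (v : Fin n → ℝ) :
    B * vecMulVec v v * Bᵀ = vecMulVec (B *ᵥ v) (B *ᵥ v) := by
  ext a b
  simp only [mul_apply, vecMulVec_apply, transpose_apply, mulVec, dotProduct]
  rw [Finset.sum_mul_sum]
  rw [Finset.sum_comm]
  apply Finset.sum_congr rfl; intro d _
  rw [Finset.sum_mul]
  apply Finset.sum_congr rfl; intro c _
  ring

/-- conjugation as a linear map -/
def conjL (B C : Matrix (Fin n) (Fin n) ℝ) :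
    Matrix (Fin n) (Fin n) ℝ →ₗ[ℝ] Matrix (Fin n) (Fin n) ℝ where
  toFun G := B * G * C
  map_add' x y := by rw [Matrix.mul_add, Matrix.add_mul]
  map_smul' c x := by rw [Matrix.mul_smul, Matrix.smul_mul, RingHom.id_apply]

@[simp] lemma conjL_apply (B C G : Matrix (Fin n) (Fin n) ℝ) : conjL B C G = B * G * C := rfl

/-- the reference matrix `1 + (1/n) J` -/
def H0 (n : ℕ) : Matrix (Fin n) (Fin n) ℝ :=
  Matrix.of fun j k => (n:ℝ)⁻¹ + if j = k then 1 else 0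

lemma H0_symm : (H0 n).IsSymm := by
  apply Matrix.IsSymm.ext
  intro i j
  simp [H0, eq_comm]

lemma lfun_H0_diag (hn : 0 < n) (j : Fin n) : lfun (j, j) (H0 n) = 2 / n := by
  rw [lfun_diag]
  have h1 : ∀ m ∈ Finset.univ.erase j, H0 n j m = (n:ℝ)⁻¹ := by
    intro m hm
    rw [Finset.mem_erase] at hm
    simp [H0, Ne.symm hm.1]
  rw [Finset.sum_congr rfl h1, Finset.sum_const, Finset.card_erase_of_mem (Finset.mem_univ j),
    Finset.card_univ, Fintype.card_fin]
  have hn' : (n:ℝ) ≠ 0 := Nat.cast_ne_zero.mpr hn.ne'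
  have : H0 n j j = (n:ℝ)⁻¹ + 1 := by simp [H0]
  rw [this]
  push_cast [Nat.cast_sub (Nat.succ_le_of_lt hn)]
  field_simp
  rw [nsmul_eq_mul, Nat.cast_sub (show 1 ≤ n from hn)]
  field_simp
  ring

lemma lfun_H0_lt (hn : 0 < n) {j k : Fin n} (h : j < k) : lfun (j, k) (H0 n) = (n:ℝ)⁻¹ := by
  rw [lfun_lt h]
  simp [H0, h.ne]

lemma lfun_H0_pos (hn : 0 < n) {q : Fin n × Fin n} (h : q.1 ≤ q.2) :
    0 < lfun q (H0 n) := by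
  have hn' : (0:ℝ) < n := by exact_mod_cast hn
  obtain ⟨j, k⟩ := q
  replace h : j ≤ k := h
  rcases eq_or_lt_of_le h with h' | h'
  · replace h' : j = k := h'
    subst h'
    rw [lfun_H0_diag hn]
    positivity
  · replace h' : j < k := h'
    rw [lfun_H0_lt hn h']
    positivity

lemma H0_posdef (hn : 0 < n) : (H0 n).PosDef := by
  refine posDef_iff_dotProduct_mulVec.mpr ⟨?_, ?_⟩
  · exact H0_symm
  · intro x hx
    have hmv : ∀ j, (H0 n *ᵥ x) j = (n:ℝ)⁻¹ * (∑ k, x k) + x j := by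
      intro j
      simp only [mulVec, dotProduct, H0, of_apply, add_mul, ite_mul, one_mul, zero_mul]
      rw [Finset.sum_add_distrib, ← Finset.mul_sum, Finset.sum_ite_eq]
      simp
    have hstar : (star x : Fin n → ℝ) = x := by ext i; simp
    rw [hstar]
    have : x ⬝ᵥ (H0 n *ᵥ x) = (n:ℝ)⁻¹ * (∑ k, x k) * (∑ j, x j) + ∑ j, x j ^ 2 := by
      simp only [dotProduct]
      rw [Finset.sum_congr rfl (fun j _ => by rw [hmv j])]
      simp only [mul_add]
      rw [Finset.sum_add_distrib, ← Finset.sum_mul]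
      simp_rw [← pow_two]
      ring_nf
    have h2 : (0:ℝ) < ∑ j, x j ^ 2 := by
      have heq : ∑ j, x j ^ 2 = x ⬝ᵥ x := by simp [dotProduct, pow_two]
      have := dotProduct_self_eq_zero (v := x)
      have hle : (0:ℝ) ≤ ∑ j, x j ^ 2 := Finset.sum_nonneg fun j _ => sq_nonneg _
      rcases hle.lt_or_eq with h | h
      · exact h
      · exfalso; exact hx (this.mp (by rw [← heq, ← h]))
    have h1 : (0:ℝ) ≤ (n:ℝ)⁻¹ * (∑ k, x k) * (∑ j, x j) := by
      rw [mul_assoc]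
      exact mul_nonneg (by positivity) (mul_self_nonneg _)
    rw [this]
    linarith

open scoped MatrixOrder in
lemma psd_sqrt {A : Matrix (Fin n) (Fin n) ℝ} (hA : A.PosSemidef) :
    ∃ S : Matrix (Fin n) (Fin n) ℝ, S * S = A ∧ S.IsHermitian :=
  ⟨CFC.sqrt A, CFC.sqrt_mul_sqrt_self A hA.nonneg, (CFC.sqrt_nonneg A).posSemidef.1⟩

lemma w_ne_zero (q : Fin n × Fin n) : w q ≠ 0 := by
  intro h
  have := congr_fun h q.1
  simp [w] at this

lemma abs_apply_le (L : Matrix (Fin n) (Fin n) ℝ →ₗ[ℝ] ℝ) (M : Matrix (Fin n) (Fin n) ℝ)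
    (r : ℝ) (h : ∀ j k, |M j k| ≤ r) :
    |L M| ≤ r * ∑ j, ∑ k, |L (Matrix.single j k 1)| := by
  have hM : L M = ∑ j, ∑ k, M j k * L (Matrix.single j k 1) := by
    nth_rewrite 1 [matrix_eq_sum_single M]
    rw [map_sum]
    apply Finset.sum_congr rfl; intro j _
    rw [map_sum]
    apply Finset.sum_congr rfl; intro k _
    have : Matrix.single j k (M j k) = M j k • Matrix.single j k (1:ℝ) := by
      rw [smul_single, smul_eq_mul, mul_one]
    rw [this, _root_.map_smul, smul_eq_mul]
  rw [hM, Finset.mul_sum]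
  refine (Finset.abs_sum_le_sum_abs _ _).trans (Finset.sum_le_sum fun j _ => ?_)
  rw [Finset.mul_sum]
  refine (Finset.abs_sum_le_sum_abs _ _).trans (Finset.sum_le_sum fun k _ => ?_)
  rw [abs_mul]
  have h0 : (0:ℝ) ≤ r := le_trans (abs_nonneg _) (h j k)
  exact mul_le_mul_of_nonneg_right (h j k) (abs_nonneg _)

lemma herm_transpose {M : Matrix (Fin n) (Fin n) ℝ} (h : M.IsHermitian) : Mᵀ = M := by
  ext i j
  calc Mᵀ i j = Mᴴ i j := by simp [conjTranspose_apply]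
  _ = M i j := by rw [h]

lemma card_pairs (n : ℕ) :
    Fintype.card {p : Fin n × Fin n // p.1 ≤ p.2} = n * (n + 1) / 2 := by
  rw [← Fintype.card_congr (Sym2.sortEquiv (α := Fin n))]
  rw [Sym2.card]
  rw [Fintype.card_fin, Nat.choose_two_right]
  simp [Nat.mul_comm]

end NashAux

open NashAux

/-- Nash's decomposition of metrics near `G₀` into `n(n+1)/2` primitive metrics. -/
theorem stmt2 (n : ℕ) (hn : 0 < n) (G₀ : Matrix (Fin n) (Fin n) ℝ)
    (hsymm : G₀.IsSymm) (hpos : G₀.PosDef) :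
    ∃ (r : ℝ), 0 < r ∧
    ∃ (ξ : Fin (n * (n + 1) / 2) → (Fin n → ℝ))
      (L : Fin (n * (n + 1) / 2) → (Matrix (Fin n) (Fin n) ℝ →ₗ[ℝ] ℝ)),
      (∀ i, (ξ i) ⬝ᵥ (ξ i) = 1) ∧
      (∀ G : Matrix (Fin n) (Fin n) ℝ, G.IsSymm →
        G = ∑ i, L i G • vecMulVec (ξ i) (ξ i)) ∧
      (∀ G : Matrix (Fin n) (Fin n) ℝ, G.IsSymm →
        (∀ j k, |G j k - G₀ j k| ≤ r) → ∀ i, r ≤ L i G) := by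
  classical
  -- square roots
  have hpsd := hpos.posSemidef
  obtain ⟨S1, hS1sq, hS1h⟩ := psd_sqrt hpsd
  have hS1t : S1ᵀ = S1 := herm_transpose hS1h
  have hS1det : IsUnit S1.det := by
    have h0 : S1.det * S1.det = G₀.det := by rw [← det_mul, hS1sq]
    have := hpos.det_pos
    refine isUnit_iff_ne_zero.mpr fun h => ?_
    rw [h, mul_zero] at h0
    rw [← h0] at this; exact lt_irrefl _ this
  have hH0pd := H0_posdef (n := n) hn
  have hH0psd := hH0pd.posSemidef
  obtain ⟨S2, hS2sq, hS2h⟩ := psd_sqrt hH0psd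
  have hS2t : S2ᵀ = S2 := herm_transpose hS2h
  have hS2det : IsUnit S2.det := by
    have h0 : S2.det * S2.det = (H0 n).det := by rw [← det_mul, hS2sq]
    have := hH0pd.det_pos
    refine isUnit_iff_ne_zero.mpr fun h => ?_
    rw [h, mul_zero] at h0
    rw [← h0] at this; exact lt_irrefl _ this
  set A := S1 * S2⁻¹ with hAdef
  have hS2invdet : IsUnit S2⁻¹.det := by
    rw [det_nonsing_inv]
    exact isUnit_ringInverse.mpr hS2det
  have hAdet : IsUnit A.det := by
    rw [hAdef, det_mul]
    exact hS1det.mul hS2invdet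
  have hAinv : A⁻¹ = S2 * S1⁻¹ := by
    rw [hAdef, Matrix.mul_inv_rev, Matrix.nonsing_inv_nonsing_inv _ hS2det]
  -- conjugating G₀ gives H0
  have hconjG₀ : A⁻¹ * G₀ * A⁻¹ᵀ = H0 n := by
    rw [hAinv, transpose_mul, transpose_nonsing_inv, hS1t, hS2t, ← hS1sq]
    simp only [Matrix.mul_assoc]
    rw [Matrix.nonsing_inv_mul_cancel_left _ _ hS1det,
      Matrix.mul_nonsing_inv_cancel_left _ _ hS1det, hS2sq]
  -- reconstruction of G from its conjugate
  have hrecon : ∀ G : Matrix (Fin n) (Fin n) ℝ, A * (A⁻¹ * G * A⁻¹ᵀ) * Aᵀ = G := by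
    intro G
    have ht : A⁻¹ᵀ * Aᵀ = 1 := by
      rw [← transpose_mul, Matrix.mul_nonsing_inv _ hAdet, transpose_one]
    simp only [Matrix.mul_assoc]
    rw [ht, Matrix.mul_one, Matrix.mul_nonsing_inv_cancel_left _ _ hAdet]
  have hconjsymm : ∀ G : Matrix (Fin n) (Fin n) ℝ, G.IsSymm →
      (A⁻¹ * G * A⁻¹ᵀ).IsSymm := by
    intro G hG
    unfold Matrix.IsSymm
    rw [transpose_mul, transpose_mul, transpose_transpose, hG.eq, Matrix.mul_assoc]
  -- index equivalence
  have hcard : Fintype.card {p : Fin n × Fin n // p.1 ≤ p.2} = n * (n + 1) / 2 :=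
    card_pairs n
  set e := (Fintype.equivFinOfCardEq hcard).symm with hedef
  -- vectors and normalization
  set v : {p : Fin n × Fin n // p.1 ≤ p.2} → (Fin n → ℝ) := fun p => A *ᵥ w p.1 with hvdef
  have hvne : ∀ p, v p ≠ 0 := by
    intro p h
    have hinj : Function.Injective A.mulVec :=
      mulVec_injective_iff_isUnit.mpr ((isUnit_iff_isUnit_det A).mpr hAdet)
    have : w p.1 = 0 := by
      apply hinj
      rw [Matrix.mulVec_zero]
      exact h
    exact w_ne_zero p.1 this
  set s : {p : Fin n × Fin n // p.1 ≤ p.2} → ℝ := fun p => v p ⬝ᵥ v p with hsdef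
  have hs : ∀ p, 0 < s p := by
    intro p
    have hle : 0 ≤ s p := Finset.sum_nonneg fun j _ => mul_self_nonneg _
    rcases hle.lt_or_eq with h | h
    · exact h
    · exact absurd (dotProduct_self_eq_zero.mp h.symm) (hvne p)
  set ξ' : {p : Fin n × Fin n // p.1 ≤ p.2} → (Fin n → ℝ) :=
    fun p => (Real.sqrt (s p))⁻¹ • v p with hξ'def
  have hsqrt_ne : ∀ p, Real.sqrt (s p) ≠ 0 := fun p => (Real.sqrt_pos.mpr (hs p)).ne'
  have hξ'unit : ∀ p, ξ' p ⬝ᵥ ξ' p = 1 := by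
    intro p
    rw [hξ'def]
    simp only [smul_dotProduct, dotProduct_smul, smul_eq_mul]
    rw [← mul_assoc, ← mul_inv, Real.mul_self_sqrt (hs p).le]
    exact inv_mul_cancel₀ (hs p).ne'
  have hvmv : ∀ p, vecMulVec (v p) (v p) = s p • vecMulVec (ξ' p) (ξ' p) := by
    intro p
    ext a b
    simp only [hξ'def, vecMulVec_apply, Matrix.smul_apply, Pi.smul_apply, smul_eq_mul]
    have hc : s p * ((Real.sqrt (s p))⁻¹ * (Real.sqrt (s p))⁻¹) = 1 := by
      rw [← mul_inv, Real.mul_self_sqrt (hs p).le]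
      exact mul_inv_cancel₀ (hs p).ne'
    linear_combination (-(v p a * v p b)) * hc
  -- the linear functionals
  set L : Fin (n * (n + 1) / 2) → (Matrix (Fin n) (Fin n) ℝ →ₗ[ℝ] ℝ) :=
    fun i => s (e i) • ((lfun (e i).1).comp (conjL A⁻¹ A⁻¹ᵀ)) with hLdef
  have hLapply : ∀ i G, L i G = s (e i) * lfun (e i).1 (A⁻¹ * G * A⁻¹ᵀ) := by
    intro i G
    rw [hLdef]
    simp [LinearMap.smul_apply, LinearMap.comp_apply, conjL_apply, smul_eq_mul]
  -- decomposition property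
  have hdecomp : ∀ G : Matrix (Fin n) (Fin n) ℝ, G.IsSymm →
      G = ∑ i, L i G • vecMulVec (ξ' (e i)) (ξ' (e i)) := by
    intro G hG
    have h1 : G = A * (A⁻¹ * G * A⁻¹ᵀ) * Aᵀ := (hrecon G).symm
    nth_rewrite 1 [h1]
    rw [decomp (A⁻¹ * G * A⁻¹ᵀ) (hconjsymm G hG)]
    rw [Matrix.mul_sum, Matrix.sum_mul]
    rw [← Equiv.sum_comp e
      (fun p => A * (lfun p.1 (A⁻¹ * G * A⁻¹ᵀ) • vecMulVec (w p.1) (w p.1)) * Aᵀ)]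
    apply Finset.sum_congr rfl
    intro i _
    rw [Matrix.mul_smul, Matrix.smul_mul, conj_vecMulVec]
    have hv : A *ᵥ w (↑(e i) : Fin n × Fin n) = v (e i) := rfl
    rw [hv, hvmv, hLapply, smul_smul, mul_comm]
  -- value at G₀
  have hc : ∀ i, 0 < L i G₀ := by
    intro i
    rw [hLapply, hconjG₀]
    exact mul_pos (hs _) (lfun_H0_pos hn (e i).2)
  -- the constants
  set K : Fin (n * (n + 1) / 2) → ℝ :=
    fun i => ∑ j, ∑ k, |L i (Matrix.single j k 1)| with hKdef
  have hK : ∀ i, 0 ≤ K i :=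
    fun i => Finset.sum_nonneg fun j _ => Finset.sum_nonneg fun k _ => abs_nonneg _
  have hNpos : 0 < n * (n + 1) / 2 := by
    have h2 : 1 * 2 ≤ n * (n + 1) := Nat.mul_le_mul hn (by omega)
    omega
  have : Nonempty (Fin (n * (n + 1) / 2)) := Fin.pos_iff_nonempty.mp hNpos
  have hune : (Finset.univ : Finset (Fin (n * (n + 1) / 2))).Nonempty := Finset.univ_nonempty
  set r : ℝ := Finset.univ.inf' hune (fun i => L i G₀ / (1 + K i)) with hrdef
  have hrpos : 0 < r := by
    rw [hrdef, Finset.lt_inf'_iff]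
    intro i _
    exact div_pos (hc i) (by have := hK i; linarith)
  refine ⟨r, hrpos, fun i => ξ' (e i), L, fun i => hξ'unit (e i), hdecomp, ?_⟩
  intro G hG hclose i
  have hle : r ≤ L i G₀ / (1 + K i) := Finset.inf'_le _ (Finset.mem_univ i)
  have h1K : (0:ℝ) < 1 + K i := by have := hK i; linarith
  have hrK : r * (1 + K i) ≤ L i G₀ := by rwa [← le_div_iff₀ h1K]
  have hdiff : |L i (G - G₀)| ≤ r * K i := by
    have := abs_apply_le (L i) (G - G₀) r (fun j k => by
      rw [Matrix.sub_apply]; exact hclose j k)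
    exact this
  have hsub : L i (G - G₀) = L i G - L i G₀ := map_sub _ _ _
  have hexp : r * (1 + K i) = r + r * K i := by ring
  rw [hexp] at hrK
  have h1 := (abs_le.mp hdiff).1
  rw [hsub] at h1
  linarith

end NashAux
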